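/- Let G be a nonregular connected k-uniform hypergraph (k ≥ 2) with n vertices, m edges, maximum degree Δ, diameter D, and spectral radius λ (the largest H-eigenvalue of the adjacency tensor). Then Δ - λ > k(nΔ - km) / (n·(2(k-1)·D·(nΔ - km) + k)). -/

import Mathlib

open Finset

lemma q_sq (k : ℕ) (hk : 2 ≤ k) {t : ℝ} (ht : 0 ≤ t) :
    t ^ ((k:ℝ)/2) * t ^ ((k:ℝ)/2) = t ^ k := by
  have hkR : (0:ℝ) < k := by exact_mod_cast Nat.lt_of_lt_of_le Nat.zero_lt_two hk
  rw [← Real.rpow_add' ht (by rw [show (k:ℝ)/2 + (k:ℝ)/2 = (k:ℝ) by ring]; positivity),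
    show (k:ℝ)/2 + (k:ℝ)/2 = (k:ℝ) by ring, Real.rpow_natCast]

lemma pair_amgm {α : Type*} [DecidableEq α] (k : ℕ) (hk : 2 ≤ k) (e : Finset α)
    (hcard : e.card = k) (y : α → ℝ) (hy : ∀ i, 0 ≤ y i) {a b : α} (ha : a ∈ e) (hb : b ∈ e)
    (hab : a ≠ b) :
    (y a ^ ((k:ℝ)/2) - y b ^ ((k:ℝ)/2))^2 ≤ ∑ i ∈ e, y i ^ k - k * ∏ i ∈ e, y i := by
  have hkR : (0:ℝ) < k := by exact_mod_cast Nat.lt_of_lt_of_le Nat.zero_lt_two hk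
  set q : α → ℝ := fun i => y i ^ ((k:ℝ)/2) with hq
  have hqnn : ∀ i, 0 ≤ q i := fun i => Real.rpow_nonneg (hy i) _
  set z : α → ℝ := fun i => if i = a ∨ i = b then q a * q b else y i ^ k with hz
  have hznn : ∀ i ∈ e, 0 ≤ z i := by
    intro i _
    by_cases h : i = a ∨ i = b
    · simp only [hz, if_pos h]; exact mul_nonneg (hqnn a) (hqnn b)
    · simp only [hz, if_neg h]; exact pow_nonneg (hy i) k
  have hb' : b ∈ e.erase a := mem_erase.mpr ⟨hab.symm, hb⟩
  have hza : z a = q a * q b := by simp [hz]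
  have hzb : z b = q a * q b := by simp [hz]
  have hsplitz : ∏ i ∈ e, z i = z a * (z b * ∏ i ∈ (e.erase a).erase b, z i) := by
    rw [Finset.mul_prod_erase (e.erase a) z hb', Finset.mul_prod_erase e z ha]
  have hsplity : ∏ i ∈ e, y i ^ k = y a ^ k * (y b ^ k * ∏ i ∈ (e.erase a).erase b, y i ^ k) := by
    rw [Finset.mul_prod_erase (e.erase a) (fun i => y i ^ k) hb',
      Finset.mul_prod_erase e (fun i => y i ^ k) ha]
  have hrest : ∏ i ∈ (e.erase a).erase b, z i = ∏ i ∈ (e.erase a).erase b, y i ^ k := by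
    refine Finset.prod_congr rfl fun i hi => ?_
    have hib : i ≠ b := (Finset.mem_erase.mp hi).1
    have hia : i ≠ a := (Finset.mem_erase.mp (Finset.mem_of_mem_erase hi)).1
    simp [hz, hia, hib]
  have hqa2 : q a * q a = y a ^ k := q_sq k hk (hy a)
  have hqb2 : q b * q b = y b ^ k := q_sq k hk (hy b)
  have hprodz : ∏ i ∈ e, z i = (∏ i ∈ e, y i) ^ k := by
    rw [hsplitz, hrest, hza, hzb, ← Finset.prod_pow, hsplity, ← hqa2, ← hqb2]; ring
  -- AM-GM
  have hAM := Real.geom_mean_le_arith_mean_weighted e (fun _ => (k:ℝ)⁻¹) z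
    (fun i _ => by positivity) (by
      rw [Finset.sum_const, hcard, nsmul_eq_mul, mul_inv_cancel₀ (ne_of_gt hkR)]) hznn
  have hyprod : 0 ≤ ∏ i ∈ e, y i := Finset.prod_nonneg fun i _ => hy i
  have hLHS : ∏ i ∈ e, z i ^ ((k:ℝ)⁻¹) = ∏ i ∈ e, y i := by
    rw [Real.finset_prod_rpow e z hznn, hprodz, ← Real.rpow_natCast (∏ i ∈ e, y i) k,
      ← Real.rpow_mul hyprod, mul_inv_cancel₀ (ne_of_gt hkR), Real.rpow_one]
  have hkey : (k:ℝ) * ∏ i ∈ e, y i ≤ ∑ i ∈ e, z i := by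
    have h2 : ∑ i ∈ e, (k:ℝ)⁻¹ * z i = (k:ℝ)⁻¹ * ∑ i ∈ e, z i := by
      rw [Finset.mul_sum]
    rw [hLHS, h2] at hAM
    calc (k:ℝ) * ∏ i ∈ e, y i ≤ (k:ℝ) * ((k:ℝ)⁻¹ * ∑ i ∈ e, z i) := by
          exact mul_le_mul_of_nonneg_left hAM (le_of_lt hkR)
      _ = ∑ i ∈ e, z i := by field_simp
  -- sums split
  have hsumz : ∑ i ∈ e, z i = z a + (z b + ∑ i ∈ (e.erase a).erase b, z i) := by
    rw [Finset.add_sum_erase (e.erase a) z hb', Finset.add_sum_erase e z ha]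
  have hsumy : ∑ i ∈ e, y i ^ k = y a ^ k + (y b ^ k + ∑ i ∈ (e.erase a).erase b, y i ^ k) := by
    rw [Finset.add_sum_erase (e.erase a) (fun i => y i ^ k) hb',
      Finset.add_sum_erase e (fun i => y i ^ k) ha]
  have hrests : ∑ i ∈ (e.erase a).erase b, z i = ∑ i ∈ (e.erase a).erase b, y i ^ k := by
    refine Finset.sum_congr rfl fun i hi => ?_
    have hib : i ≠ b := (Finset.mem_erase.mp hi).1
    have hia : i ≠ a := (Finset.mem_erase.mp (Finset.mem_of_mem_erase hi)).1
    simp [hz, hia, hib]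
  have : ∑ i ∈ e, y i ^ k - ∑ i ∈ e, z i = (q a - q b)^2 := by
    rw [hsumz, hsumy, hrests, hza, hzb, ← hqa2, ← hqb2]; ring
  nlinarith [hkey]

lemma amgm0 {α : Type*} [DecidableEq α] (k : ℕ) (hk : 2 ≤ k) (e : Finset α)
    (hcard : e.card = k) (y : α → ℝ) (hy : ∀ i, 0 ≤ y i) :
    (0:ℝ) ≤ ∑ i ∈ e, y i ^ k - k * ∏ i ∈ e, y i := by
  have hkR : (0:ℝ) < k := by exact_mod_cast Nat.lt_of_lt_of_le Nat.zero_lt_two hk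
  have hAM := Real.geom_mean_le_arith_mean_weighted e (fun _ => (k:ℝ)⁻¹) (fun i => y i ^ k)
    (fun i _ => by positivity) (by
      rw [Finset.sum_const, hcard, nsmul_eq_mul, mul_inv_cancel₀ (ne_of_gt hkR)])
    (fun i _ => pow_nonneg (hy i) k)
  have hyprod : 0 ≤ ∏ i ∈ e, y i := Finset.prod_nonneg fun i _ => hy i
  have hLHS : ∏ i ∈ e, (y i ^ k) ^ ((k:ℝ)⁻¹) = ∏ i ∈ e, y i := by
    rw [Real.finset_prod_rpow e _ (fun i _ => pow_nonneg (hy i) k), Finset.prod_pow,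
      ← Real.rpow_natCast (∏ i ∈ e, y i) k, ← Real.rpow_mul hyprod,
      mul_inv_cancel₀ (ne_of_gt hkR), Real.rpow_one]
  rw [hLHS, ← Finset.mul_sum] at hAM
  have := mul_le_mul_of_nonneg_left hAM (le_of_lt hkR)
  rw [← mul_assoc, mul_inv_cancel₀ (ne_of_gt hkR), one_mul] at this
  linarith

lemma swap_filter_sum {n : ℕ} (E : Finset (Finset (Fin n))) (F : Fin n → Finset (Fin n) → ℝ) :
    ∑ i : Fin n, ∑ e ∈ E.filter (fun e => i ∈ e), F i e = ∑ e ∈ E, ∑ i ∈ e, F i e := by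
  simp_rw [Finset.sum_filter]
  rw [Finset.sum_comm]
  refine Finset.sum_congr rfl fun e he => ?_
  rw [← Finset.sum_filter]
  congr 1
  ext i
  simp

lemma dist_le_of_nat_path {n L : ℕ} {E : Finset (Finset (Fin n))} {dist : Fin n → Fin n → ℕ}
    (hdist : ∀ i j : Fin n, IsLeast {l : ℕ | ∃ p : Fin (l + 1) → Fin n,
        p 0 = i ∧ p (Fin.last l) = j ∧
        ∀ t : Fin l, ∃ e ∈ E, p t.castSucc ∈ e ∧ p t.succ ∈ e} (dist i j))
    (P : ℕ → Fin n) (i j : Fin n) (h0 : P 0 = i) (hL : P L = j)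
    (hstep : ∀ t < L, ∃ e ∈ E, P t ∈ e ∧ P (t+1) ∈ e) : dist i j ≤ L := by
  refine (hdist i j).2 ?_
  refine ⟨fun s => P s.val, by simpa using h0, by simpa using hL, fun t => ?_⟩
  simpa [Fin.coe_castSucc, Fin.val_succ] using hstep t.val t.isLt

/-- Cioabă–Gregory–Nikiforov type bound for nonregular connected k-uniform
hypergraphs.  Here `E` is the edge set of a `k`-uniform hypergraph on `n`
vertices, `d` the degree function, `Δ` the maximum degree, `D` the diameter,
and `lam` the largest H-eigenvalue of the adjacency tensor, witnessed by the
eigenvalue equation `∑_{e ∋ i} ∏_{j ∈ e \ {i}} x j = lam * (x i)^(k-1)`. -/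
theorem stmt_13 (n k : ℕ) (hk : 2 ≤ k) (hn : 0 < n)
    (E : Finset (Finset (Fin n))) (hunif : ∀ e ∈ E, e.card = k)
    (d : Fin n → ℕ) (hd : ∀ i, d i = (E.filter (fun e => i ∈ e)).card)
    (Δ : ℕ) (hΔub : ∀ i, d i ≤ Δ) (hΔmem : ∃ i, d i = Δ)
    (hnonreg : ∃ i j : Fin n, d i ≠ d j)
    (hconn : ∀ i j : Fin n,
      Relation.ReflTransGen (fun a b => ∃ e ∈ E, a ∈ e ∧ b ∈ e ∧ a ≠ b) i j)
    (D : ℕ)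
    -- `D` is the diameter: every pair of vertices is joined by a path of
    -- length at most `D`, and some pair requires length exactly `D`.
    (dist : Fin n → Fin n → ℕ)
    (hdist : ∀ i j : Fin n, IsLeast {l : ℕ | ∃ p : Fin (l + 1) → Fin n,
        p 0 = i ∧ p (Fin.last l) = j ∧
        ∀ t : Fin l, ∃ e ∈ E, p t.castSucc ∈ e ∧ p t.succ ∈ e} (dist i j))
    (hDdiam : (∀ i j : Fin n, dist i j ≤ D) ∧ ∃ i j : Fin n, dist i j = D)
    (lam : ℝ)
    (heig : ∃ x : Fin n → ℝ, x ≠ 0 ∧ ∀ i : Fin n,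
      ∑ e ∈ E.filter (fun e => i ∈ e), ∏ j ∈ e.erase i, x j = lam * x i ^ (k - 1))
    (hmax : ∀ ν : ℝ, (∃ x : Fin n → ℝ, x ≠ 0 ∧ ∀ i : Fin n,
      ∑ e ∈ E.filter (fun e => i ∈ e), ∏ j ∈ e.erase i, x j = ν * x i ^ (k - 1)) →
      ν ≤ lam) :
    (Δ : ℝ) - lam >
      (k : ℝ) * ((n : ℝ) * Δ - k * E.card) /
        ((n : ℝ) * (2 * ((k : ℝ) - 1) * D * ((n : ℝ) * Δ - k * E.card) + k)) := by
  obtain ⟨x, hx0, hxeig⟩ := heig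
  have hk1 : 1 ≤ k := le_trans one_le_two hk
  have hkR : (2:ℝ) ≤ k := by exact_mod_cast hk
  set m : ℝ := (E.card : ℝ) with hm
  set S : ℝ := (n:ℝ) * Δ - k * m with hS
  -- degree sum identity
  have hdsum : ∑ i : Fin n, (d i : ℝ) = k * m := by
    have h1 : ∀ i : Fin n, (d i : ℝ) = ∑ e ∈ E.filter (fun e => i ∈ e), (1:ℝ) := by
      intro i; simp [hd]
    calc ∑ i : Fin n, (d i : ℝ) = ∑ e ∈ E, ∑ i ∈ e, (1:ℝ) := by
          simp_rw [h1]; exact swap_filter_sum E (fun _ _ => 1)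
      _ = ∑ e ∈ E, (k:ℝ) := by
          refine Finset.sum_congr rfl fun e he => ?_
          simp [hunif e he]
      _ = k * m := by rw [Finset.sum_const, nsmul_eq_mul, hm]; ring
  have hSsum : ∑ i : Fin n, ((Δ:ℝ) - d i) = S := by
    rw [Finset.sum_sub_distrib, Finset.sum_const, hdsum, card_univ, Fintype.card_fin,
      nsmul_eq_mul, hS]
  -- a vertex of small degree
  obtain ⟨i0, j0, hij⟩ := hnonreg
  have hwex : ∃ w, d w < Δ := by
    rcases Nat.lt_or_ge (d i0) (d j0) with h | h
    · exact ⟨i0, lt_of_lt_of_le h (hΔub j0)⟩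
    · exact ⟨j0, lt_of_le_of_ne (hΔub j0) (fun hEq => by have := hΔub i0; omega)⟩
  obtain ⟨w, hw⟩ := hwex
  have hΔ1 : 1 ≤ Δ := by have := hΔub i0; omega
  have hS1 : (1:ℝ) ≤ S := by
    rw [← hSsum]
    have hterm : (1:ℝ) ≤ (Δ:ℝ) - d w := by
      have : (d w : ℝ) + 1 ≤ (Δ:ℝ) := by exact_mod_cast Nat.succ_le_of_lt hw
      linarith
    calc (1:ℝ) ≤ (Δ:ℝ) - d w := hterm
      _ ≤ ∑ i : Fin n, ((Δ:ℝ) - d i) := by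
          refine Finset.single_le_sum (f := fun i => (Δ:ℝ) - d i) (fun i _ => ?_) (Finset.mem_univ w)
          show (0:ℝ) ≤ (Δ:ℝ) - d i
          have h2 : (d i : ℝ) ≤ (Δ:ℝ) := by exact_mod_cast hΔub i
          linarith
  have hi0j0 : i0 ≠ j0 := fun h => hij (congrArg d h)
  have hn2 : 2 ≤ n := by
    have h1 : 1 < Fintype.card (Fin n) := Fintype.one_lt_card_iff_nontrivial.mpr ⟨⟨i0, j0, hi0j0⟩⟩
    rw [Fintype.card_fin] at h1
    omega
  have hD1 : 1 ≤ D := by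
    have hle := hDdiam.1 i0 j0
    rcases Nat.eq_zero_or_pos (dist i0 j0) with h0 | h0
    · exfalso
      obtain ⟨p, hp0, hpl, -⟩ := (hdist i0 j0).1
      have hlast : Fin.last (dist i0 j0) = 0 := by ext; simp [h0]
      rw [hlast, hp0] at hpl
      exact hi0j0 hpl
    · omega
  have hnR : (2:ℝ) ≤ n := by exact_mod_cast hn2
  have hDR : (1:ℝ) ≤ D := by exact_mod_cast hD1
  have hSpos : (0:ℝ) < S := by linarith
  have hkpos : (0:ℝ) < k := by linarith
  have hkD : (k:ℝ) ≤ 2 * ((k:ℝ)-1) * D := by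
    nlinarith [mul_nonneg (sub_nonneg.mpr hkR) (sub_nonneg.mpr hDR)]
  have e1 : (k:ℝ) * S ≤ 2 * ((k:ℝ)-1) * D * S := mul_le_mul_of_nonneg_right hkD hSpos.le
  have hinner : (0:ℝ) < 2 * ((k:ℝ) - 1) * D * S + k := by nlinarith
  have hdenom : (0:ℝ) < (n:ℝ) * (2 * ((k:ℝ) - 1) * D * S + k) := by nlinarith
  have hRlt1 : (k : ℝ) * S / ((n:ℝ) * (2 * ((k:ℝ) - 1) * D * S + k)) < 1 := by
    rw [div_lt_one hdenom]
    have e3 : 2*((k:ℝ)-1)*D*S + k ≤ (n:ℝ) * (2*((k:ℝ)-1)*D*S + k) :=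
      le_mul_of_one_le_left hinner.le (by linarith)
    linarith
  by_cases hcase : lam ≤ (Δ:ℝ) - 1
  · have hΔR : (1:ℝ) ≤ (Δ:ℝ) := by exact_mod_cast hΔ1
    linarith
  push_neg at hcase
  have hΔR : (1:ℝ) ≤ (Δ:ℝ) := by exact_mod_cast hΔ1
  have hlam0 : 0 ≤ lam := by linarith
  -- the nonnegative sub-eigenvector
  set y : Fin n → ℝ := fun i => |x i| with hy
  have hynn : ∀ i, 0 ≤ y i := fun i => abs_nonneg _
  have hsub : ∀ i : Fin n, lam * y i ^ (k-1) ≤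
      ∑ e ∈ E.filter (fun e => i ∈ e), ∏ j ∈ e.erase i, y j := by
    intro i
    have h1 : lam * y i ^ (k-1) = |lam * x i ^ (k-1)| := by
      rw [abs_mul, abs_pow, abs_of_nonneg hlam0, hy]
    rw [h1, ← hxeig i]
    calc |∑ e ∈ E.filter (fun e => i ∈ e), ∏ j ∈ e.erase i, x j|
        ≤ ∑ e ∈ E.filter (fun e => i ∈ e), |∏ j ∈ e.erase i, x j| :=
          Finset.abs_sum_le_sum_abs _ _
      _ = ∑ e ∈ E.filter (fun e => i ∈ e), ∏ j ∈ e.erase i, y j := by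
          refine Finset.sum_congr rfl fun e he => ?_
          rw [Finset.abs_prod]
  set T : ℝ := ∑ i : Fin n, y i ^ k with hT
  have hTpos : 0 < T := by
    have hxne : ∃ i, x i ≠ 0 := by
      by_contra h; push_neg at h; exact hx0 (funext fun i => h i)
    obtain ⟨i1, hi1⟩ := hxne
    have : 0 < y i1 ^ k := pow_pos (abs_pos.mpr hi1) k
    refine lt_of_lt_of_le this ?_
    exact Finset.single_le_sum (fun i _ => pow_nonneg (hynn i) k) (Finset.mem_univ i1)
  set Sp : ℝ := ∑ e ∈ E, ∏ i ∈ e, y i with hSp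
  have hpowsplit : ∀ i, y i ^ k = y i ^ (k-1) * y i := by
    intro i
    conv_lhs => rw [show k = (k-1)+1 by omega]
    rw [pow_succ]
  have hlamT : lam * T ≤ k * Sp := by
    have h1 : lam * T = ∑ i : Fin n, (lam * y i ^ (k-1)) * y i := by
      rw [hT, Finset.mul_sum]
      refine Finset.sum_congr rfl fun i _ => ?_
      rw [hpowsplit i]; ring
    have h2 : ∑ i : Fin n, (lam * y i ^ (k-1)) * y i ≤
        ∑ i : Fin n, (∑ e ∈ E.filter (fun e => i ∈ e), ∏ j ∈ e.erase i, y j) * y i := by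
      refine Finset.sum_le_sum fun i _ => ?_
      exact mul_le_mul_of_nonneg_right (hsub i) (hynn i)
    have h3 : ∑ i : Fin n, (∑ e ∈ E.filter (fun e => i ∈ e), ∏ j ∈ e.erase i, y j) * y i
        = k * Sp := by
      have h4 : ∀ i : Fin n, (∑ e ∈ E.filter (fun e => i ∈ e), ∏ j ∈ e.erase i, y j) * y i
          = ∑ e ∈ E.filter (fun e => i ∈ e), y i * ∏ j ∈ e.erase i, y j := by
        intro i; rw [Finset.sum_mul]; refine Finset.sum_congr rfl fun e _ => ?_; ring
      simp_rw [h4]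
      rw [swap_filter_sum E (fun i e => y i * ∏ j ∈ e.erase i, y j)]
      have h5 : ∀ e ∈ E, ∑ i ∈ e, y i * ∏ j ∈ e.erase i, y j = k * ∏ j ∈ e, y j := by
        intro e he
        have : ∀ i ∈ e, y i * ∏ j ∈ e.erase i, y j = ∏ j ∈ e, y j := fun i hi =>
          Finset.mul_prod_erase e y hi
        rw [Finset.sum_congr rfl this, Finset.sum_const, hunif e he, nsmul_eq_mul]
      rw [Finset.sum_congr rfl h5, hSp, Finset.mul_sum]
    linarith [h1, h2, h3]
  
  -- extremal vertices
  obtain ⟨u, -, hu⟩ := Finset.exists_max_image univ y ⟨i0, Finset.mem_univ i0⟩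
  obtain ⟨v, -, hv⟩ := Finset.exists_min_image univ y ⟨i0, Finset.mem_univ i0⟩
  by_cases hconst : y u ≤ y v
  · -- y is constant, contradiction with lam > Δ - 1
    exfalso
    have hall : ∀ i, y i = y u := fun i =>
      le_antisymm (hu i (Finset.mem_univ i)) (le_trans hconst (hv i (Finset.mem_univ i)))
    have hcpos : 0 < y u := by
      rcases lt_or_eq_of_le (hynn u) with h | h
      · exact h
      · exfalso
        have hT0 : T = 0 := by
          rw [hT]
          refine Finset.sum_eq_zero fun i _ => ?_
          rw [hall i, ← h, zero_pow (by omega)]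
        exact absurd hT0 (ne_of_gt hTpos)
    have h2 : ∑ e ∈ E.filter (fun e => w ∈ e), ∏ j ∈ e.erase w, y j
        = (d w : ℝ) * y u ^ (k-1) := by
      have h3 : ∀ e ∈ E.filter (fun e => w ∈ e), ∏ j ∈ e.erase w, y j = y u ^ (k-1) := by
        intro e he
        rw [Finset.mem_filter] at he
        rw [Finset.prod_congr rfl (fun j _ => hall j), Finset.prod_const,
          Finset.card_erase_of_mem he.2, hunif e he.1]
      rw [Finset.sum_congr rfl h3, Finset.sum_const, nsmul_eq_mul, hd w]
    have h4 : lam * y u ^ (k-1) ≤ (d w : ℝ) * y u ^ (k-1) := by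
      have := hsub w
      rw [h2] at this
      calc lam * y u ^ (k-1) = lam * y w ^ (k-1) := by rw [hall w]
        _ ≤ (d w : ℝ) * y u ^ (k-1) := this
    have h5 : lam ≤ (d w : ℝ) := le_of_mul_le_mul_right h4 (pow_pos hcpos (k-1))
    have h6 : (d w : ℝ) ≤ (Δ:ℝ) - 1 := by
      have : (d w : ℝ) + 1 ≤ (Δ:ℝ) := by exact_mod_cast Nat.succ_le_of_lt hw
      linarith
    linarith
  -- main case : y nonconstant
  push_neg at hconst
  set q : Fin n → ℝ := fun i => y i ^ ((k:ℝ)/2) with hqdef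
  set A : ℝ := q v with hA
  set B : ℝ := q u with hB
  have hk2pos : (0:ℝ) < (k:ℝ)/2 := by linarith
  have hAB : A < B := Real.rpow_lt_rpow (hynn v) hconst hk2pos
  have hA0 : 0 ≤ A := Real.rpow_nonneg (hynn v) _
  have hB2 : B^2 = y u ^ k := by rw [sq]; exact q_sq k hk (hynn u)
  have hA2 : A^2 = y v ^ k := by rw [sq]; exact q_sq k hk (hynn v)
  have hTlt : T < (n:ℝ) * B^2 := by
    rw [hB2, hT]
    calc ∑ i : Fin n, y i ^ k < ∑ _i : Fin n, y u ^ k := by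
          refine Finset.sum_lt_sum (fun i _ => ?_) ⟨v, Finset.mem_univ v, ?_⟩
          · exact pow_le_pow_left₀ (hynn i) (hu i (Finset.mem_univ i)) k
          · exact pow_lt_pow_left₀ hconst (hynn v) (by omega)
      _ = (n:ℝ) * y u ^ k := by
          rw [Finset.sum_const, Finset.card_univ, Fintype.card_fin, nsmul_eq_mul]
  -- geodesic from u to v
  have hℓD : dist u v ≤ D := hDdiam.1 u v
  have huv : u ≠ v := fun h => (ne_of_gt hconst) (by rw [h])
  have hℓ1 : 1 ≤ dist u v := by
    rcases Nat.eq_zero_or_pos (dist u v) with h0 | h0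
    · exfalso
      obtain ⟨p, hp0, hpl, -⟩ := (hdist u v).1
      have hlast : Fin.last (dist u v) = 0 := by ext; simp [h0]
      rw [hlast, hp0] at hpl
      exact huv hpl
    · omega
  set ℓ : ℕ := dist u v with hℓdef
  obtain ⟨p, hp0, hpl, hpstep⟩ := (hdist u v).1
  set P : ℕ → Fin n := fun t => p ⟨min t ℓ, Nat.lt_succ_of_le (Nat.min_le_right t ℓ)⟩ with hPdef
  have hP0 : P 0 = u := by
    have : (⟨min 0 ℓ, Nat.lt_succ_of_le (Nat.min_le_right 0 ℓ)⟩ : Fin (ℓ+1)) = 0 := by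
      ext; simp
    simp only [hPdef]; rw [this, hp0]
  have hPl : P ℓ = v := by
    have : (⟨min ℓ ℓ, Nat.lt_succ_of_le (Nat.min_le_right ℓ ℓ)⟩ : Fin (ℓ+1)) = Fin.last ℓ := by
      ext; simp
    simp only [hPdef]; rw [this, hpl]
  have hPstep : ∀ t, t < ℓ → ∃ e ∈ E, P t ∈ e ∧ P (t+1) ∈ e := by
    intro t ht
    obtain ⟨e, he, h1, h2⟩ := hpstep ⟨t, ht⟩
    refine ⟨e, he, ?_, ?_⟩
    · have heq : (⟨min t ℓ, Nat.lt_succ_of_le (Nat.min_le_right t ℓ)⟩ : Fin (ℓ+1))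
          = (⟨t, ht⟩ : Fin ℓ).castSucc := by
        ext; simp [Nat.min_eq_left (le_of_lt ht)]
      simp only [hPdef]; rw [heq]; exact h1
    · have heq : (⟨min (t+1) ℓ, Nat.lt_succ_of_le (Nat.min_le_right (t+1) ℓ)⟩ : Fin (ℓ+1))
          = (⟨t, ht⟩ : Fin ℓ).succ := by
        ext; simp [Nat.min_eq_left (Nat.succ_le_of_lt ht)]
      simp only [hPdef]; rw [heq]; exact h2
  -- choice of edges along the path
  have hedex : ∀ t : ℕ, ∃ e : Finset (Fin n), t < ℓ → (e ∈ E ∧ P t ∈ e ∧ P (t+1) ∈ e) := by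
    intro t
    by_cases ht : t < ℓ
    · obtain ⟨e, he, h1, h2⟩ := hPstep t ht
      exact ⟨e, fun _ => ⟨he, h1, h2⟩⟩
    · exact ⟨∅, fun h => absurd h ht⟩
  choose ed hed using hedex
  -- the edges along a geodesic are pairwise distinct
  have hedinj : ∀ t1 ∈ Finset.range ℓ, ∀ t2 ∈ Finset.range ℓ, ed t1 = ed t2 → t1 = t2 := by
    suffices hsuf : ∀ t1 t2, t1 < t2 → t2 < ℓ → ed t1 ≠ ed t2 by
      intro t1 h1 t2 h2 heq
      rw [Finset.mem_range] at h1 h2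
      rcases lt_trichotomy t1 t2 with h | h | h
      · exact absurd heq (hsuf _ _ h h2)
      · exact h
      · exact absurd heq.symm (hsuf _ _ h h1)
    intro t1 t2 hlt h2 heq
    set L' : ℕ := ℓ - (t2 - t1) with hL'def
    have hL'lt : L' < ℓ := by omega
    set P' : ℕ → Fin n := fun s => if s ≤ t1 then P s else P (s + (t2 - t1)) with hP'def
    have h0' : P' 0 = u := by
      simp only [hP'def]; rw [if_pos (Nat.zero_le t1)]; exact hP0
    have hL'' : P' L' = v := by
      simp only [hP'def]
      rw [if_neg (by omega), show L' + (t2 - t1) = ℓ by omega, hPl]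
    have hstep' : ∀ s, s < L' → ∃ e ∈ E, P' s ∈ e ∧ P' (s+1) ∈ e := by
      intro s hs
      rcases lt_trichotomy s t1 with h | h | h
      · refine ⟨ed s, (hed s (by omega)).1, ?_, ?_⟩ <;> simp only [hP'def]
        · rw [if_pos (by omega)]; exact (hed s (by omega)).2.1
        · rw [if_pos (by omega)]; exact (hed s (by omega)).2.2
      · refine ⟨ed t1, (hed t1 (by omega)).1, ?_, ?_⟩ <;> simp only [hP'def]
        · rw [if_pos (le_of_eq h), h]; exact (hed t1 (by omega)).2.1
        · rw [if_neg (by omega), show s + 1 + (t2 - t1) = t2 + 1 by omega, heq]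
          exact (hed t2 h2).2.2
      · refine ⟨ed (s + (t2 - t1)), (hed _ (by omega)).1, ?_, ?_⟩ <;> simp only [hP'def]
        · rw [if_neg (by omega)]; exact (hed _ (by omega)).2.1
        · rw [if_neg (by omega), show s + 1 + (t2 - t1) = (s + (t2 - t1)) + 1 by omega]
          exact (hed _ (by omega)).2.2
    have hcon := dist_le_of_nat_path hdist P' u v h0' hL'' hstep'
    omega
  -- deficit bounds
  set Def : Finset (Fin n) → ℝ := fun e => ∑ i ∈ e, y i ^ k - k * ∏ i ∈ e, y i with hDefdef
  set Df : ℝ := ∑ e ∈ E, Def e with hDfdef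
  have hDef0 : ∀ e ∈ E, 0 ≤ Def e := fun e he => amgm0 k hk e (hunif e he) y hynn
  set g : ℕ → ℝ := fun t => q (P t) with hgdef
  have hsum_sq_le : ∑ t ∈ Finset.range ℓ, (g (t+1) - g t)^2 ≤ Df := by
    have hterm : ∀ t ∈ Finset.range ℓ, (g (t+1) - g t)^2 ≤ Def (ed t) := by
      intro t ht
      rw [Finset.mem_range] at ht
      obtain ⟨heE, hm1, hm2⟩ := hed t ht
      by_cases hpp : P (t+1) = P t
      · have : g (t+1) - g t = 0 := by rw [hgdef]; simp only []; rw [hpp, sub_self]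
        rw [this]
        simpa using hDef0 (ed t) heE
      · exact pair_amgm k hk (ed t) (hunif _ heE) y hynn hm2 hm1 hpp
    calc ∑ t ∈ Finset.range ℓ, (g (t+1) - g t)^2 ≤ ∑ t ∈ Finset.range ℓ, Def (ed t) :=
          Finset.sum_le_sum hterm
      _ = ∑ e ∈ (Finset.range ℓ).image ed, Def e := (Finset.sum_image hedinj).symm
      _ ≤ Df := by
          refine Finset.sum_le_sum_of_subset_of_nonneg ?_ (fun e he _ => hDef0 e he)
          intro e he
          obtain ⟨t, ht, rfl⟩ := Finset.mem_image.mp he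
          exact (hed t (Finset.mem_range.mp ht)).1
  have htel : ∑ t ∈ Finset.range ℓ, (g (t+1) - g t) = A - B := by
    rw [Finset.sum_range_sub (fun t => g t)]
    simp only [hgdef]
    rw [hP0, hPl]
  have hsqnn : 0 ≤ ∑ t ∈ Finset.range ℓ, (g (t+1) - g t)^2 :=
    Finset.sum_nonneg fun t _ => sq_nonneg _
  have hCS : (B - A)^2 ≤ (ℓ:ℝ) * ∑ t ∈ Finset.range ℓ, (g (t+1) - g t)^2 := by
    have h1 := sq_sum_le_card_mul_sum_sq (s := Finset.range ℓ) (f := fun t => g (t+1) - g t)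
    rw [htel, Finset.card_range] at h1
    calc (B - A)^2 = (A - B)^2 := by ring
      _ ≤ (ℓ:ℝ) * ∑ t ∈ Finset.range ℓ, (g (t+1) - g t)^2 := h1
  have hDbnd : (B - A)^2 ≤ (D:ℝ) * Df := by
    have h1 : (ℓ:ℝ) ≤ (D:ℝ) := by exact_mod_cast hℓD
    calc (B - A)^2 ≤ (ℓ:ℝ) * ∑ t ∈ Finset.range ℓ, (g (t+1) - g t)^2 := hCS
      _ ≤ (D:ℝ) * ∑ t ∈ Finset.range ℓ, (g (t+1) - g t)^2 :=
          mul_le_mul_of_nonneg_right h1 hsqnn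
      _ ≤ (D:ℝ) * Df := mul_le_mul_of_nonneg_left hsum_sq_le (by linarith)
  -- vertex term
  have hΔdnn : ∀ i : Fin n, (0:ℝ) ≤ (Δ:ℝ) - d i := by
    intro i
    have : (d i : ℝ) ≤ (Δ:ℝ) := by exact_mod_cast hΔub i
    linarith
  have hvert : S * A^2 ≤ ∑ i : Fin n, ((Δ:ℝ) - d i) * y i ^ k := by
    rw [hA2]
    calc S * y v ^ k = ∑ i : Fin n, ((Δ:ℝ) - d i) * y v ^ k := by
          rw [← hSsum, Finset.sum_mul]
      _ ≤ ∑ i : Fin n, ((Δ:ℝ) - d i) * y i ^ k := by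
          refine Finset.sum_le_sum fun i _ => ?_
          exact mul_le_mul_of_nonneg_left
            (pow_le_pow_left₀ (hynn v) (hv i (Finset.mem_univ i)) k) (hΔdnn i)
  -- the fundamental identity
  have hident : (Δ:ℝ) * T - k * Sp = (∑ i : Fin n, ((Δ:ℝ) - d i) * y i ^ k) + Df := by
    have h1 : ∑ e ∈ E, ∑ i ∈ e, y i ^ k = ∑ i : Fin n, (d i : ℝ) * y i ^ k := by
      rw [← swap_filter_sum E (fun i _ => y i ^ k)]
      refine Finset.sum_congr rfl fun i _ => ?_
      rw [Finset.sum_const, hd i, nsmul_eq_mul]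
    have h2 : Df = (∑ i : Fin n, (d i:ℝ) * y i ^ k) - k * Sp := by
      simp only [hDfdef, hDefdef]
      rw [Finset.sum_sub_distrib, h1, hSp, Finset.mul_sum]
    have h3 : (Δ:ℝ) * T = ∑ i : Fin n, (Δ:ℝ) * y i ^ k := by rw [hT, Finset.mul_sum]
    have h4 : ∑ i : Fin n, ((Δ:ℝ) - d i) * y i ^ k
        = (∑ i : Fin n, (Δ:ℝ) * y i ^ k) - ∑ i : Fin n, (d i:ℝ) * y i ^ k := by
      rw [← Finset.sum_sub_distrib]
      refine Finset.sum_congr rfl fun i _ => ?_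
      ring
    rw [h2, h3, h4]
    ring
  have hkey : S * A^2 + Df ≤ ((Δ:ℝ) - lam) * T := by
    have h1 : S * A^2 + Df ≤ (∑ i : Fin n, ((Δ:ℝ) - d i) * y i ^ k) + Df := by linarith
    rw [← hident] at h1
    calc S * A^2 + Df ≤ (Δ:ℝ) * T - (k:ℝ) * Sp := h1
      _ ≤ (Δ:ℝ) * T - lam * T := by linarith
      _ = ((Δ:ℝ) - lam) * T := by ring
  -- final arithmetic
  have hRpos : 0 < (k:ℝ) * S / ((n:ℝ) * (2 * ((k:ℝ) - 1) * D * S + k)) :=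
    div_pos (mul_pos hkpos hSpos) hdenom
  have hDpos : (0:ℝ) < D := by linarith
  have hpoly : (k:ℝ)*S*B^2*(D:ℝ) ≤ (S*A^2*(D:ℝ) + (B-A)^2) * (2*((k:ℝ)-1)*(D:ℝ)*S+k) := by
    have hkey2 : 2*((k:ℝ)-1) * ((S*A^2*(D:ℝ) + (B-A)^2) * (2*((k:ℝ)-1)*(D:ℝ)*S+k)
        - (k:ℝ)*S*B^2*(D:ℝ))
        = (2*((k:ℝ)-1)*(D:ℝ)*S*A - k*(B-A))^2
          + ((k:ℝ)-2)*(B-A)^2*(2*((k:ℝ)-1)*(D:ℝ)*S+k) := by ring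
    have hsq := sq_nonneg (2*((k:ℝ)-1)*(D:ℝ)*S*A - k*(B-A))
    have hterm2 := mul_nonneg (mul_nonneg (sub_nonneg.mpr hkR) (sq_nonneg (B-A))) hinner.le
    have h2k : (0:ℝ) < 2*((k:ℝ)-1) := by linarith
    have hmul : (0:ℝ) ≤ 2*((k:ℝ)-1) * ((S*A^2*(D:ℝ) + (B-A)^2) * (2*((k:ℝ)-1)*(D:ℝ)*S+k)
        - (k:ℝ)*S*B^2*(D:ℝ)) := by
      rw [hkey2]
      have : ((k:ℝ)-2)*((B-A)^2)*(2*((k:ℝ)-1)*(D:ℝ)*S+k)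
          = ((k:ℝ)-2)*(B-A)^2*(2*((k:ℝ)-1)*(D:ℝ)*S+k) := by ring
      linarith [hsq, hterm2]
    have := (mul_nonneg_iff_of_pos_left h2k).mp hmul
    linarith
  have h7 : (k:ℝ)*S*B^2 ≤ (S*A^2+Df)*(2*((k:ℝ)-1)*(D:ℝ)*S+k) := by
    have h5 : S*A^2*(D:ℝ) + (B-A)^2 ≤ (S*A^2 + Df)*(D:ℝ) := by
      have : (S*A^2 + Df)*(D:ℝ) = S*A^2*(D:ℝ) + (D:ℝ)*Df := by ring
      linarith
    have h6 : (k:ℝ)*S*B^2*(D:ℝ) ≤ ((S*A^2+Df)*(2*((k:ℝ)-1)*(D:ℝ)*S+k))*(D:ℝ) := by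
      calc (k:ℝ)*S*B^2*(D:ℝ) ≤ (S*A^2*(D:ℝ) + (B-A)^2) * (2*((k:ℝ)-1)*(D:ℝ)*S+k) := hpoly
        _ ≤ ((S*A^2+Df)*(D:ℝ)) * (2*((k:ℝ)-1)*(D:ℝ)*S+k) :=
            mul_le_mul_of_nonneg_right h5 hinner.le
        _ = ((S*A^2+Df)*(2*((k:ℝ)-1)*(D:ℝ)*S+k))*(D:ℝ) := by ring
    exact le_of_mul_le_mul_right h6 hDpos
  have hc2 : (k:ℝ) * S / ((n:ℝ) * (2 * ((k:ℝ) - 1) * D * S + k)) * ((n:ℝ) * B^2)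
      ≤ S*A^2 + Df := by
    rw [div_mul_eq_mul_div, div_le_iff₀ hdenom]
    have hnn : (0:ℝ) ≤ n := by linarith
    have h8 := mul_le_mul_of_nonneg_left h7 hnn
    have e1 : (k:ℝ)*S*((n:ℝ)*B^2) = (n:ℝ)*((k:ℝ)*S*B^2) := by ring
    have e2 : (S*A^2+Df)*((n:ℝ)*(2*((k:ℝ)-1)*(D:ℝ)*S+k))
        = (n:ℝ)*((S*A^2+Df)*(2*((k:ℝ)-1)*(D:ℝ)*S+k)) := by ring
    rw [e1, e2]
    exact h8
  have hc1 : (k:ℝ) * S / ((n:ℝ) * (2 * ((k:ℝ) - 1) * D * S + k)) * T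
      < (k:ℝ) * S / ((n:ℝ) * (2 * ((k:ℝ) - 1) * D * S + k)) * ((n:ℝ) * B^2) :=
    mul_lt_mul_of_pos_left hTlt hRpos
  have hfin : (k:ℝ) * S / ((n:ℝ) * (2 * ((k:ℝ) - 1) * D * S + k)) * T
      < ((Δ:ℝ) - lam) * T := lt_of_lt_of_le (lt_of_lt_of_le hc1 hc2) hkey
  exact lt_of_mul_lt_mul_right hfin hTpos.le
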